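/- The subgroup D' of ℤ₄⁴ generated by (0,1,2,3), (1,0,1,2), (0,0,0,2), and (0,0,2,0) has cardinality 64, and every element of D' is orthogonal to both (0,2,0,2) and (2,0,2,0). -/
import Mathlib

private lemma half_exists : ∀ e : ZMod 4, 2 * e = 0 → ∃ d : ZMod 4, 2 * d = e := by decide

private lemma four_eq : (4 : ZMod 4) = 0 := rfl

private def Kgrp : AddSubgroup (Fin 4 → ZMod 4) where
  carrier := {v | 2 * (v 0 + v 2) = 0 ∧ 2 * (v 1 + v 3) = 0}
  add_mem' := by
    rintro a b ⟨ha1, ha2⟩ ⟨hb1, hb2⟩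
    constructor <;> simp only [Pi.add_apply] <;>
      [linear_combination ha1 + hb1; linear_combination ha2 + hb2]
  zero_mem' := by simp
  neg_mem' := by
    rintro a ⟨h1, h2⟩
    constructor <;> simp only [Pi.neg_apply] <;>
      [linear_combination -h1; linear_combination -h2]

private instance : DecidablePred (· ∈ Kgrp) :=
  fun v => decidable_of_iff (2 * (v 0 + v 2) = 0 ∧ 2 * (v 1 + v 3) = 0) Iff.rfl

private lemma closure_eq :
    AddSubgroup.closure
      ({![0,1,2,3], ![1,0,1,2], ![0,0,0,2], ![0,0,2,0]} : Set (Fin 4 → ZMod 4)) = Kgrp := by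
  apply le_antisymm
  · rw [AddSubgroup.closure_le]
    rintro x hx
    simp only [Set.mem_insert_iff, Set.mem_singleton_iff] at hx
    rcases hx with rfl | rfl | rfl | rfl <;> constructor <;> decide
  · rintro v ⟨h1, h2⟩
    obtain ⟨d, hd⟩ := half_exists (v 2 + 3 * v 0 + 2 * v 1)
      (by linear_combination h1 + v 0 * four_eq + v 1 * four_eq)
    obtain ⟨c, hc⟩ := half_exists (v 3 + v 1 + 2 * v 0)
      (by linear_combination h2 + v 0 * four_eq)
    have hmem : (v 0).val • (![1,0,1,2] : Fin 4 → ZMod 4) + (v 1).val • (![0,1,2,3] : Fin 4 → ZMod 4)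
        + d.val • (![0,0,2,0] : Fin 4 → ZMod 4) + c.val • (![0,0,0,2] : Fin 4 → ZMod 4) ∈
        AddSubgroup.closure ({![0,1,2,3], ![1,0,1,2], ![0,0,0,2], ![0,0,2,0]} : Set (Fin 4 → ZMod 4)) := by
      refine add_mem (add_mem (add_mem ?_ ?_) ?_) ?_ <;>
        exact AddSubgroup.nsmul_mem _ (AddSubgroup.subset_closure (by simp)) _
    convert hmem using 1
    have cast0 : ((v 0).val : ZMod 4) = v 0 := by simp [ZMod.natCast_val, ZMod.cast_id]
    have cast1 : ((v 1).val : ZMod 4) = v 1 := by simp [ZMod.natCast_val, ZMod.cast_id]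
    have castc : ((c).val : ZMod 4) = c := by simp [ZMod.natCast_val, ZMod.cast_id]
    have castd : ((d).val : ZMod 4) = d := by simp [ZMod.natCast_val, ZMod.cast_id]
    funext i
    fin_cases i <;>
      simp [Pi.add_apply, Pi.smul_apply, Pi.mul_apply, nsmul_eq_mul, cast0, cast1, castc, castd] <;>
      first
        | rfl
        | linear_combination -hd + (-v 1 - v 0) * four_eq
        | linear_combination -hc + (-v 1 - v 0) * four_eq

theorem stmt_2 :
    Nat.card (AddSubgroup.closure
      ({![0,1,2,3], ![1,0,1,2], ![0,0,0,2], ![0,0,2,0]} : Set (Fin 4 → ZMod 4))) = 64 ∧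
    ∀ v ∈ AddSubgroup.closure
      ({![0,1,2,3], ![1,0,1,2], ![0,0,0,2], ![0,0,2,0]} : Set (Fin 4 → ZMod 4)),
      (∑ i, v i * (![0,2,0,2] : Fin 4 → ZMod 4) i = 0) ∧
      (∑ i, v i * (![2,0,2,0] : Fin 4 → ZMod 4) i = 0) := by
  rw [closure_eq]
  constructor
  · rw [Nat.card_eq_fintype_card]
    decide
  · rintro v ⟨h1, h2⟩
    constructor <;> simp [Fin.sum_univ_four] <;>
      first
        | linear_combination h2
        | linear_combination h1
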